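/- The integral ∫₀¹ p(y)/(p'(y)(1−y²)²) dy is finite, where p'(y) = exp((2λ/μ²)·1/(1−y²)) and p(y) = ∫₀ʸ p'(z) dz. -/

import Mathlib

open Set MeasureTheory

noncomputable def stmtPhi (c y : ℝ) : ℝ := Real.exp (c * (1 / (1 - y ^ 2)))

lemma stmtPhi_pos (c y : ℝ) : 0 < stmtPhi c y := Real.exp_pos _

lemma stmtPhi_contAt (c : ℝ) {y : ℝ} (hy : y ∈ Ioo (-1 : ℝ) 1) :
    ContinuousAt (stmtPhi c) y := by
  have h : 1 - y ^ 2 ≠ 0 := by nlinarith [hy.1, hy.2]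
  have h1 : ContinuousAt (fun y : ℝ => 1 - y ^ 2) y := by fun_prop
  have h2 : ContinuousAt (fun y : ℝ => c * (1 / (1 - y ^ 2))) y :=
    continuousAt_const.mul (continuousAt_const.div h1 h)
  exact Real.continuous_exp.continuousAt.comp h2

lemma stmtPhi_contOn (c : ℝ) : ContinuousOn (stmtPhi c) (Ioo (-1 : ℝ) 1) :=
  fun y hy => (stmtPhi_contAt c hy).continuousWithinAt

lemma stmtPhi_intble (c : ℝ) {a b : ℝ} (h : uIcc a b ⊆ Ioo (-1 : ℝ) 1) :
    IntervalIntegrable (stmtPhi c) MeasureTheory.volume a b :=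
  ((stmtPhi_contOn c).mono h).intervalIntegrable

lemma stmt_uIcc_sub {a b : ℝ} (ha0 : 0 ≤ a) (hb1 : b < 1) (hab : a ≤ b) :
    uIcc a b ⊆ Ioo (-1 : ℝ) 1 := by
  rw [uIcc_of_le hab]
  intro x hx
  exact ⟨by linarith [hx.1], by linarith [hx.2]⟩

lemma stmtPhi_mono (c : ℝ) (hc : 0 < c) {z w : ℝ} (hz : 0 ≤ z) (hzw : z ≤ w) (hw : w < 1) :
    stmtPhi c z ≤ stmtPhi c w := by
  have hw2 : 0 < 1 - w ^ 2 := by nlinarith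
  have hz2 : 1 - w ^ 2 ≤ 1 - z ^ 2 := by nlinarith
  have : 1 / (1 - z ^ 2) ≤ 1 / (1 - w ^ 2) := one_div_le_one_div_of_le hw2 hz2
  exact Real.exp_le_exp.2 (mul_le_mul_of_nonneg_left this hc.le)

lemma stmt_p_hasDeriv (c : ℝ) {y : ℝ} (hy : y ∈ Ioo (-1 : ℝ) 1) (hy0 : 0 ≤ y) :
    HasDerivAt (fun u => ∫ z in (0 : ℝ)..u, stmtPhi c z) (stmtPhi c y) y := by
  refine intervalIntegral.integral_hasDerivAt_right
    (stmtPhi_intble c (stmt_uIcc_sub le_rfl hy.2 hy0)) ?_ (stmtPhi_contAt c hy)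
  exact (stmtPhi_contOn c).stronglyMeasurableAtFilter isOpen_Ioo y hy

set_option maxHeartbeats 1000000 in
/-- Key pointwise bound: `c² p(y) ≤ (16c² + 16 + 4c) p'(y)(1-y²)²` on `(0,1)`. -/
lemma stmt_key (c : ℝ) (hc : 0 < c) {y : ℝ} (hy0 : 0 < y) (hy1 : y < 1) :
    c ^ 2 * (∫ z in (0 : ℝ)..y, stmtPhi c z)
      ≤ (16 * c ^ 2 + 16 + 4 * c) * (stmtPhi c y * (1 - y ^ 2) ^ 2) := by
  have hu : 0 < 1 - y ^ 2 := by nlinarith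
  have hP := stmtPhi_pos c y
  by_cases hcase : y ^ 2 ≤ 3 / 4
  · -- easy region: (1-y²)² ≥ 1/16
    have h1 : (∫ z in (0 : ℝ)..y, stmtPhi c z) ≤ ∫ z in (0 : ℝ)..y, stmtPhi c y := by
      apply intervalIntegral.integral_mono_on hy0.le
        (stmtPhi_intble c (stmt_uIcc_sub le_rfl hy1 hy0.le))
        intervalIntegrable_const
      intro x hx
      exact stmtPhi_mono c hc hx.1 hx.2 hy1
    have h2 : (∫ z in (0 : ℝ)..y, (stmtPhi c y : ℝ)) = y * stmtPhi c y := by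
      simp [intervalIntegral.integral_const, smul_eq_mul]
    rw [h2] at h1
    have hI : (∫ z in (0 : ℝ)..y, stmtPhi c z) ≤ stmtPhi c y := by nlinarith
    have h16 : (1 : ℝ) ≤ 16 * (1 - y ^ 2) ^ 2 := by nlinarith
    calc c ^ 2 * (∫ z in (0 : ℝ)..y, stmtPhi c z) ≤ c ^ 2 * stmtPhi c y :=
          mul_le_mul_of_nonneg_left hI (by positivity)
      _ ≤ 16 * c ^ 2 * (stmtPhi c y * (1 - y ^ 2) ^ 2) := by
          nlinarith [mul_nonneg (mul_nonneg (sq_nonneg c) hP.le)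
            (by linarith : (0:ℝ) ≤ 16 * (1 - y ^ 2) ^ 2 - 1)]
      _ ≤ (16 * c ^ 2 + 16 + 4 * c) * (stmtPhi c y * (1 - y ^ 2) ^ 2) := by
          nlinarith [mul_nonneg hP.le (sq_nonneg (1 - y ^ 2)), hc]
  · -- hard region: y² > 3/4
    push_neg at hcase
    have hyhalf : (1 : ℝ) / 2 < y := by nlinarith
    set m := Real.sqrt (2 * y ^ 2 - 1) with hmdef
    have hm2 : m ^ 2 = 2 * y ^ 2 - 1 := Real.sq_sqrt (by nlinarith)
    have hm0 : 0 ≤ m := Real.sqrt_nonneg _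
    have hmy : m ≤ y := by nlinarith [hm2]
    have hm1 : m < 1 := lt_of_le_of_lt hmy hy1
    have hum : 1 - m ^ 2 = 2 * (1 - y ^ 2) := by rw [hm2]; ring
    have hPm := stmtPhi_pos c m
    -- split the integral
    have hsplit : (∫ z in (0 : ℝ)..y, stmtPhi c z)
        = (∫ z in (0 : ℝ)..m, stmtPhi c z) + ∫ z in m..y, stmtPhi c z :=
      (intervalIntegral.integral_add_adjacent_intervals
        (stmtPhi_intble c (stmt_uIcc_sub le_rfl hm1 hm0))
        (stmtPhi_intble c (stmt_uIcc_sub hm0 hy1 hmy))).symm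
    -- first piece: ∫₀^m ≤ phi c m
    have hfirst : (∫ z in (0 : ℝ)..m, stmtPhi c z) ≤ stmtPhi c m := by
      have h1 : (∫ z in (0 : ℝ)..m, stmtPhi c z) ≤ ∫ z in (0 : ℝ)..m, stmtPhi c m := by
        apply intervalIntegral.integral_mono_on hm0
          (stmtPhi_intble c (stmt_uIcc_sub le_rfl hm1 hm0))
          intervalIntegrable_const
        intro x hx
        exact stmtPhi_mono c hc hx.1 hx.2 hm1
      have h2 : (∫ z in (0 : ℝ)..m, (stmtPhi c m : ℝ)) = m * stmtPhi c m := by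
        simp [intervalIntegral.integral_const, smul_eq_mul]
      rw [h2] at h1
      nlinarith [hPm]
    -- exp t ≥ t²/4 with t = c/(2(1-y²))
    have ht : 0 < c / (2 * (1 - y ^ 2)) := by positivity
    have hexp : (c / (2 * (1 - y ^ 2))) ^ 2 / 4 ≤ Real.exp (c / (2 * (1 - y ^ 2))) := by
      set s := c / (2 * (1 - y ^ 2)) with hsdef
      have h1 : s / 2 + 1 ≤ Real.exp (s / 2) := by
        have := Real.add_one_le_exp (s / 2); linarith
      have h2 : Real.exp s = Real.exp (s / 2) * Real.exp (s / 2) := by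
        rw [← Real.exp_add]; ring_nf
      nlinarith [Real.exp_pos (s / 2), ht]
    have hPy : stmtPhi c y = stmtPhi c m * Real.exp (c / (2 * (1 - y ^ 2))) := by
      rw [stmtPhi, stmtPhi, ← Real.exp_add]
      congr 1
      rw [hum]
      field_simp
      ring
    have hfirst2 : c ^ 2 * stmtPhi c m ≤ 16 * (stmtPhi c y * (1 - y ^ 2) ^ 2) := by
      have h3 : c ^ 2 ≤ Real.exp (c / (2 * (1 - y ^ 2))) * (16 * (1 - y ^ 2) ^ 2) := by
        have e1 : c ^ 2 = (c / (2 * (1 - y ^ 2))) ^ 2 / 4 * (16 * (1 - y ^ 2) ^ 2) := by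
          field_simp
          ring
        rw [e1]
        exact mul_le_mul_of_nonneg_right hexp (by positivity)
      rw [hPy]
      calc c ^ 2 * stmtPhi c m
          ≤ Real.exp (c / (2 * (1 - y ^ 2))) * (16 * (1 - y ^ 2) ^ 2) * stmtPhi c m :=
            mul_le_mul_of_nonneg_right h3 hPm.le
        _ = 16 * (stmtPhi c m * Real.exp (c / (2 * (1 - y ^ 2))) * (1 - y ^ 2) ^ 2) := by ring
    have hfirst3 : c ^ 2 * (∫ z in (0 : ℝ)..m, stmtPhi c z)
        ≤ 16 * (stmtPhi c y * (1 - y ^ 2) ^ 2) :=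
      le_trans (mul_le_mul_of_nonneg_left hfirst (by positivity)) hfirst2
    -- second piece
    have hα : 0 < c / (4 * (1 - y ^ 2) ^ 2) := by positivity
    set α := c / (4 * (1 - y ^ 2) ^ 2) with hαdef
    have hptwise : ∀ z ∈ Icc m y, stmtPhi c z ≤ stmtPhi c y * Real.exp (α * z - α * y) := by
      intro z hz
      have hz0 : 0 ≤ z := le_trans hm0 hz.1
      have hz1 : z < 1 := lt_of_le_of_lt hz.2 hy1
      have hv : 0 < 1 - z ^ 2 := by nlinarith
      have hvle : 1 - z ^ 2 ≤ 2 * (1 - y ^ 2) := by nlinarith [hm2, hz.1, hm0]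
      have hd : 0 ≤ y - z := by linarith [hz.2]
      rw [stmtPhi, stmtPhi, ← Real.exp_add]
      apply Real.exp_le_exp.2
      have h1 : c * (1 / (1 - z ^ 2)) - c * (1 / (1 - y ^ 2))
          = c * (z ^ 2 - y ^ 2) / ((1 - y ^ 2) * (1 - z ^ 2)) := by
        field_simp
        ring
      have h2 : α * z - α * y = c * (z - y) / (4 * (1 - y ^ 2) ^ 2) := by
        rw [hαdef]; ring
      have h3 : c * (z ^ 2 - y ^ 2) / ((1 - y ^ 2) * (1 - z ^ 2))
          ≤ c * (z - y) / (4 * (1 - y ^ 2) ^ 2) := by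
        rw [div_le_div_iff₀ (by positivity) (by positivity)]
        nlinarith [mul_nonneg (mul_nonneg (mul_nonneg hc.le hd) hu.le)
            (by linarith : (0:ℝ) ≤ 2 * (1 - y ^ 2) - (1 - z ^ 2)),
          mul_nonneg (mul_nonneg (mul_nonneg (mul_nonneg hc.le hd) hu.le) hu.le)
            (by linarith : (0:ℝ) ≤ 4 * (z + y) - 2)]
      linarith
    have hcontexp : Continuous (fun z : ℝ => stmtPhi c y * Real.exp (α * z - α * y)) := by
      fun_prop
    have hsecond : (∫ z in m..y, stmtPhi c z)
        ≤ ∫ z in m..y, stmtPhi c y * Real.exp (α * z - α * y) := by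
      apply intervalIntegral.integral_mono_on hmy
        (stmtPhi_intble c (stmt_uIcc_sub hm0 hy1 hmy))
        (hcontexp.intervalIntegrable m y)
      exact hptwise
    have hFderiv : ∀ z ∈ uIcc m y,
        HasDerivAt (fun z => stmtPhi c y * (Real.exp (α * z - α * y) / α))
          (stmtPhi c y * Real.exp (α * z - α * y)) z := by
      intro z _
      have h1 : HasDerivAt (fun z : ℝ => α * z - α * y) α z := by
        simpa using ((hasDerivAt_id z).const_mul α).sub_const (α * y)
      have h2 := (h1.exp.div_const α).const_mul (stmtPhi c y)
      rw [mul_div_cancel_right₀ _ hα.ne'] at h2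
      exact h2
    have hcalc : (∫ z in m..y, stmtPhi c y * Real.exp (α * z - α * y))
        = stmtPhi c y * (Real.exp (α * y - α * y) / α)
          - stmtPhi c y * (Real.exp (α * m - α * y) / α) :=
      intervalIntegral.integral_eq_sub_of_hasDerivAt hFderiv
        (hcontexp.intervalIntegrable m y)
    have hsecond2 : (∫ z in m..y, stmtPhi c z) ≤ stmtPhi c y / α := by
      have he1 : Real.exp (α * y - α * y) = 1 := by simp
      have hpos : 0 ≤ stmtPhi c y * (Real.exp (α * m - α * y) / α) := by positivity
      calc (∫ z in m..y, stmtPhi c z)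
          ≤ stmtPhi c y * (Real.exp (α * y - α * y) / α)
            - stmtPhi c y * (Real.exp (α * m - α * y) / α) := by rw [← hcalc]; exact hsecond
        _ ≤ stmtPhi c y * (1 / α) := by rw [he1]; linarith
        _ = stmtPhi c y / α := by ring
    have hαval : stmtPhi c y / α = stmtPhi c y * (4 * (1 - y ^ 2) ^ 2) / c := by
      rw [hαdef, div_div_eq_mul_div]
    have hsecond3 : c ^ 2 * (∫ z in m..y, stmtPhi c z)
        ≤ 4 * c * (stmtPhi c y * (1 - y ^ 2) ^ 2) := by
      rw [hαval] at hsecond2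
      have h4 : c ^ 2 * (stmtPhi c y * (4 * (1 - y ^ 2) ^ 2) / c)
          = 4 * c * (stmtPhi c y * (1 - y ^ 2) ^ 2) := by
        field_simp
      calc c ^ 2 * (∫ z in m..y, stmtPhi c z)
          ≤ c ^ 2 * (stmtPhi c y * (4 * (1 - y ^ 2) ^ 2) / c) :=
            mul_le_mul_of_nonneg_left hsecond2 (by positivity)
        _ = 4 * c * (stmtPhi c y * (1 - y ^ 2) ^ 2) := h4
    rw [hsplit]
    have hPu : 0 ≤ stmtPhi c y * (1 - y ^ 2) ^ 2 := by positivity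
    nlinarith [mul_nonneg (sq_nonneg c) hPu]

lemma stmt_main (c : ℝ) (hc : 0 < c) :
    MeasureTheory.IntegrableOn
      (fun y : ℝ => (∫ z in (0 : ℝ)..y, stmtPhi c z) / (stmtPhi c y * (1 - y ^ 2) ^ 2))
      (Set.Ioo (0 : ℝ) 1) := by
  set f := fun y : ℝ => (∫ z in (0 : ℝ)..y, stmtPhi c z) / (stmtPhi c y * (1 - y ^ 2) ^ 2)
    with hfdef
  have hsub : Ioo (0 : ℝ) 1 ⊆ Ioo (-1 : ℝ) 1 := fun x hx => ⟨by linarith [hx.1], hx.2⟩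
  have hcont : ContinuousOn f (Ioo (0 : ℝ) 1) := by
    apply ContinuousOn.div
    · intro y hy
      exact ((stmt_p_hasDeriv c (hsub hy) hy.1.le).continuousAt).continuousWithinAt
    · intro y hy
      exact ((stmtPhi_contAt c (hsub hy)).mul (by fun_prop :
        ContinuousAt (fun y : ℝ => (1 - y ^ 2) ^ 2) y)).continuousWithinAt
    · intro y hy
      have := stmtPhi_pos c y
      have h2 : 0 < 1 - y ^ 2 := by nlinarith [hy.1, hy.2]
      positivity
  refine ⟨hcont.aestronglyMeasurable measurableSet_Ioo, ?_⟩
  apply MeasureTheory.HasFiniteIntegral.restrict_of_bounded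
    (C := (16 * c ^ 2 + 16 + 4 * c) / c ^ 2) measure_Ioo_lt_top
  rw [ae_restrict_iff' measurableSet_Ioo]
  apply Filter.Eventually.of_forall
  intro y hy
  have hy0 := hy.1
  have hy1 := hy.2
  have hu : 0 < 1 - y ^ 2 := by nlinarith
  have hD : 0 < stmtPhi c y * (1 - y ^ 2) ^ 2 := mul_pos (stmtPhi_pos c y) (by positivity)
  have hnum : 0 ≤ ∫ z in (0 : ℝ)..y, stmtPhi c z :=
    intervalIntegral.integral_nonneg hy0.le (fun u _ => (stmtPhi_pos c u).le)
  have hfy : 0 ≤ f y := div_nonneg hnum hD.le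
  rw [Real.norm_eq_abs, abs_of_nonneg hfy, hfdef]
  simp only
  rw [div_le_div_iff₀ hD (by positivity : (0:ℝ) < c ^ 2)]
  nlinarith [stmt_key c hc hy0 hy1]

theorem stmt13 (lam mu : ℝ) (hlam : 0 < lam) (hmu : 0 < mu) :
    MeasureTheory.IntegrableOn
      (fun y : ℝ =>
        (∫ z in (0 : ℝ)..y, Real.exp (2 * lam / mu ^ 2 * (1 / (1 - z ^ 2))))
          / (Real.exp (2 * lam / mu ^ 2 * (1 / (1 - y ^ 2))) * (1 - y ^ 2) ^ 2))
      (Set.Ioo (0 : ℝ) 1) := by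
  have h := stmt_main (2 * lam / mu ^ 2) (div_pos (by linarith) (by positivity))
  simpa only [stmtPhi] using h
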